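/- Let A be a unital complex *-algebra and τ : A → ℂ a linear functional with τ(xy) = τ(yx) for all x,y ∈ A. Fix n ≥ 1, a sign pattern ε = (ε_1,…,ε_n) ∈ {1,*}^n, elements x_1,…,x_n ∈ A, and matrices a_1,…,a_n ∈ M_m(ℂ) satisfying the cyclic trace property. For z ∈ ℂⁿ set S_z = 1 + Σ_{j=1}^n z_j (a_j^{ε_j} ⊗ x_j) ∈ M_m(A). Then for every integer k ≥ 0, the function z ↦ (tr_m ⊗ τ)((S_z^* S_z − 1)^k) is a polynomial function in the 2n variables z_1,…,z_n, conj(z_1),…,conj(z_n), and the coefficient of the monomial z^ε := ∏_{j=1}^n z_j^{ε_j} in this polynomial equals τ(x_1^{ε_1} x_2^{ε_2} ⋯ x_n^{ε_n}) · k · binom(α(ε), n−k), where binom denotes the ordinary binomial coefficient (equal to 0 when n−k < 0 or n−k > α(ε)). -/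

import Mathlib

open scoped Matrix ComplexConjugate

/-- `a ⊗ x`: the matrix with entries `a i j • x`, an element of `M_m(A)`. -/
noncomputable def matTensor {m : ℕ} {A : Type*} [Ring A] [Module ℂ A]
    (a : Matrix (Fin m) (Fin m) ℂ) (x : A) : Matrix (Fin m) (Fin m) A :=
  Matrix.of fun i j => a i j • x

namespace CombLemma

open Fin.NatCast Fin.CommRing

variable {n : ℕ}

/-- The alphabet of blocks. -/
abbrev F (n : ℕ) := Fin n ⊕ Fin n ⊕ (Fin n × Fin n)

variable (ε : Fin n → Bool)

def sing (j : Fin n) : F n := if ε j then Sum.inr (Sum.inl j) else Sum.inl j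

def pr (i j : Fin n) : F n := Sum.inr (Sum.inr (i, j))

def wl : F n → List (Fin n)
  | Sum.inl j => [j]
  | Sum.inr (Sum.inl i) => [i]
  | Sum.inr (Sum.inr (i, j)) => [i, j]

def shape : F n → Prop
  | Sum.inl j => ε j = false
  | Sum.inr (Sum.inl i) => ε i = true
  | Sum.inr (Sum.inr (i, j)) => ε i = true ∧ ε j = false

def wordL (l : List (F n)) : List (Fin n) := l.flatMap wl

@[simp] lemma wordL_nil : wordL ([] : List (F n)) = [] := rfl

@[simp] lemma wordL_cons (u : F n) (l : List (F n)) :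
    wordL (u :: l) = wl u ++ wordL l := rfl

/-- The word `[c, c+1, …, c+N-1]`. -/
def W [NeZero n] : ℕ → Fin n → List (Fin n)
  | 0, _ => []
  | N+1, c => c :: W N (c+1)

@[simp] lemma W_length [NeZero n] (N : ℕ) (c : Fin n) : (W N c).length = N := by
  induction N generalizing c with
  | zero => rfl
  | succ N ih => simp [W, ih]

lemma W_get [NeZero n] (N : ℕ) (c : Fin n) (p : ℕ) (hp : p < (W N c).length) :
    (W N c).get ⟨p, hp⟩ = c + (p : Fin n) := by
  induction N generalizing c p with
  | zero => simp [W] at hp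
  | succ N ih =>
    cases p with
    | zero => simp [W]
    | succ p =>
      have h2 : p < (W N (c+1)).length := by
        simpa [W] using Nat.lt_of_succ_lt_succ (by simpa [W] using hp)
      have : (W (N+1) c).get ⟨p+1, hp⟩ = (W N (c+1)).get ⟨p, h2⟩ := rfl
      rw [this, ih]
      have : ((p+1 : ℕ) : Fin n) = (p : Fin n) + 1 := by push_cast; ring
      rw [this]; ring

def vcount : List (Fin n) → ℕ
  | [] => 0
  | [_] => 0
  | j :: j' :: w => (if ε j = true ∧ ε j' = false then 1 else 0) + vcount (j' :: w)

def blocksF : List (Fin n) → ℕ → Finset (List (F n))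
  | [], 0 => {[]}
  | [], _+1 => ∅
  | _ :: _, 0 => ∅
  | [j], k+1 => (blocksF [] k).image (List.cons (sing ε j))
  | j :: j' :: w, k+1 =>
      ((blocksF (j' :: w) k).image (List.cons (sing ε j))) ∪
      (if ε j = true ∧ ε j' = false then (blocksF w k).image (List.cons (pr j j')) else ∅)



@[simp] lemma wl_sing (j : Fin n) : wl (sing ε j) = [j] := by
  unfold sing; split <;> rfl

lemma shape_sing (j : Fin n) : shape ε (sing ε j) := by
  by_cases h : ε j <;> simp [sing, shape, h]

@[simp] lemma wl_pr (i j : Fin n) : wl (pr i j) = [i, j] := rfl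

lemma shape_pr {i j : Fin n} : shape ε (pr i j) ↔ (ε i = true ∧ ε j = false) := Iff.rfl

lemma wl_ne_nil (u : F n) : wl u ≠ [] := by
  rcases u with j | i | ⟨i, j⟩ <;> simp [wl]

lemma mem_blocksF {w : List (Fin n)} {k : ℕ} {l : List (F n)} :
    l ∈ blocksF ε w k ↔ wordL l = w ∧ (∀ u ∈ l, shape ε u) ∧ l.length = k := by
  induction w, k using blocksF.induct generalizing l with
  | case1 =>
    simp only [blocksF, Finset.mem_singleton, List.length_eq_zero_iff]
    constructor
    · rintro rfl; simp
    · rintro ⟨-, -, rfl⟩; rfl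
  | case2 k =>
    simp only [blocksF, Finset.notMem_empty, false_iff]
    rintro ⟨hw, -, hl⟩
    rcases l with - | ⟨u, l⟩
    · simp at hl
    · rw [wordL_cons] at hw
      exact wl_ne_nil u (List.append_eq_nil_iff.1 hw).1
  | case3 j w =>
    simp only [blocksF, Finset.notMem_empty, false_iff]
    rintro ⟨hw, -, hl⟩
    rcases l with - | ⟨u, l⟩
    · simp [wordL] at hw
    · simp at hl
  | case4 j k ih1 =>
    simp only [blocksF, Finset.mem_image]
    constructor
    · rintro ⟨l', hl', rfl⟩
      obtain ⟨h1, h2, h3⟩ := ih1.1 hl'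
      refine ⟨by simp [h1], ?_, by simp [h3]⟩
      intro u hu'
      rcases List.mem_cons.1 hu' with rfl | hu
      · exact shape_sing ε j
      · exact h2 u hu
    · rintro ⟨hw, hsh, hl⟩
      rcases l with - | ⟨u, l⟩
      · simp at hl
      have hu := hsh u (by simp)
      rcases u with j₀ | i₀ | ⟨i₀, j₀⟩
      · simp only [wordL_cons, wl, List.cons_append, List.cons.injEq] at hw
        obtain ⟨rfl, hw⟩ := hw
        have : wordL l = [] := by simpa using hw
        refine ⟨l, ih1.2 ⟨this, fun u hu => hsh u (by simp [hu]), by simpa using hl⟩, ?_⟩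
        simp only [shape] at hu
        simp [sing, hu]
      · simp only [wordL_cons, wl, List.cons_append, List.cons.injEq] at hw
        obtain ⟨rfl, hw⟩ := hw
        have : wordL l = [] := by simpa using hw
        refine ⟨l, ih1.2 ⟨this, fun u hu => hsh u (by simp [hu]), by simpa using hl⟩, ?_⟩
        simp only [shape] at hu
        simp [sing, hu]
      · simp only [wordL_cons, wl, List.cons_append, List.cons.injEq] at hw
        obtain ⟨rfl, hw⟩ := hw
        exact absurd hw (by simp)
  | case5 j j' w k ih2 ih1 =>
    simp only [blocksF, Finset.mem_union, Finset.mem_image]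
    constructor
    · rintro (⟨l', hl', rfl⟩ | hif)
      · obtain ⟨h1, h2, h3⟩ := ih2.1 hl'
        refine ⟨by simp [h1], ?_, by simp [h3]⟩
        intro u hu'
        rcases List.mem_cons.1 hu' with rfl | hu
        · exact shape_sing ε j
        · exact h2 u hu
      · by_cases hv : ε j = true ∧ ε j' = false
        · rw [if_pos hv] at hif
          obtain ⟨l', hl', rfl⟩ := Finset.mem_image.1 hif
          obtain ⟨h1, h2, h3⟩ := ih1.1 hl'
          refine ⟨by simp [h1], ?_, by simp [h3]⟩
          intro u hu'
          rcases List.mem_cons.1 hu' with rfl | hu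
          · exact hv
          · exact h2 u hu
        · rw [if_neg hv] at hif; simp at hif
    · rintro ⟨hw, hsh, hl⟩
      rcases l with - | ⟨u, l⟩
      · simp at hl
      have hu := hsh u (by simp)
      rcases u with j₀ | i₀ | ⟨i₀, j₀⟩
      · simp only [wordL_cons, wl, List.cons_append, List.nil_append, List.cons.injEq] at hw
        obtain ⟨rfl, hw⟩ := hw
        refine Or.inl ⟨l, ih2.2 ⟨hw, fun u hu => hsh u (by simp [hu]), by simpa using hl⟩, ?_⟩
        simp only [shape] at hu
        simp [sing, hu]
      · simp only [wordL_cons, wl, List.cons_append, List.nil_append, List.cons.injEq] at hw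
        obtain ⟨rfl, hw⟩ := hw
        refine Or.inl ⟨l, ih2.2 ⟨hw, fun u hu => hsh u (by simp [hu]), by simpa using hl⟩, ?_⟩
        simp only [shape] at hu
        simp [sing, hu]
      · simp only [wordL_cons, wl, List.cons_append, List.cons.injEq] at hw
        obtain ⟨rfl, rfl, hw⟩ := hw
        simp only [shape] at hu
        rw [if_pos hu]
        exact Or.inr (Finset.mem_image.2
          ⟨l, ih1.2 ⟨hw, fun u hu => hsh u (by simp [hu]), by simpa using hl⟩, rfl⟩)

end CombLemma

namespace CombLemma

open Fin.NatCast Fin.CommRing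

variable {n : ℕ} (ε : Fin n → Bool)

lemma vcount_le (j : Fin n) (w : List (Fin n)) : vcount ε (j :: w) ≤ w.length := by
  induction w generalizing j with
  | nil => simp [vcount]
  | cons j' w ih =>
    simp only [vcount, List.length_cons]
    have := ih j'
    split <;> omega

lemma le_length_wordL (l : List (F n)) : l.length ≤ (wordL l).length := by
  induction l with
  | nil => simp
  | cons u l ih =>
    have : 1 ≤ (wl u).length := by rcases u with j | i | ⟨i, j⟩ <;> simp [wl]
    simp only [wordL_cons, List.length_append, List.length_cons]
    omega

lemma blocksF_eq_empty {w : List (Fin n)} {k : ℕ} (h : w.length < k) :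
    blocksF ε w k = ∅ := by
  rw [Finset.eq_empty_iff_forall_notMem]
  intro l hl
  obtain ⟨hw, -, hk⟩ := (mem_blocksF ε).1 hl
  have := le_length_wordL l
  rw [hw, hk] at this
  omega

lemma vcount_cons_false {j' : Fin n} (h : ε j' = false) (w : List (Fin n)) :
    vcount ε (j' :: w) = vcount ε w := by
  cases w with
  | nil => rfl
  | cons j'' w' => simp [vcount, h]

lemma sing_ne_pr (j i i' : Fin n) : sing ε j ≠ pr i i' := by
  by_cases h : ε j <;> simp [sing, pr, h]

lemma card_blocksF {w : List (Fin n)} {k q : ℕ} (hq : k + q = w.length) :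
    (blocksF ε w k).card = (vcount ε w).choose q := by
  induction w, k using blocksF.induct generalizing q with
  | case1 =>
    obtain rfl : q = 0 := by simpa using hq
    simp [blocksF, vcount]
  | case2 k => simp at hq
  | case3 j w =>
    simp only [List.length_cons, Nat.zero_add] at hq
    subst hq
    have h1 := vcount_le ε j w
    rw [Nat.choose_eq_zero_of_lt (by omega)]
    simp [blocksF]
  | case4 j k ih1 =>
    simp only [List.length_singleton] at hq
    obtain ⟨rfl, rfl⟩ : k = 0 ∧ q = 0 := by omega
    show ((blocksF ε [] 0).image (List.cons (sing ε j))).card = _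
    rw [Finset.card_image_of_injective _ (fun l₁ l₂ h => by simpa using h)]
    simp [blocksF, vcount]
  | case5 j j' w k ih2 ih1 =>
    simp only [List.length_cons] at hq
    have hq' : k + q = (j' :: w).length := by simp only [List.length_cons]; omega
    have hdisj : Disjoint ((blocksF ε (j' :: w) k).image (List.cons (sing ε j)))
        (if ε j = true ∧ ε j' = false then (blocksF ε w k).image (List.cons (pr j j')) else ∅) := by
      split
      · rw [Finset.disjoint_left]
        rintro l hl1 hl2
        obtain ⟨l₁, -, rfl⟩ := Finset.mem_image.1 hl1
        obtain ⟨l₂, -, heq⟩ := Finset.mem_image.1 hl2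
        injection heq with h1 h2
        exact sing_ne_pr ε j j j' h1.symm
      · simp
    show Finset.card (_ ∪ _) = _
    rw [Finset.card_union_of_disjoint hdisj,
      Finset.card_image_of_injective _ (fun l₁ l₂ h => by simpa using h)]
    by_cases hv : ε j = true ∧ ε j' = false
    · rw [if_pos hv, Finset.card_image_of_injective _ (fun l₁ l₂ h => by simpa using h)]
      have hvc : vcount ε (j :: j' :: w) = vcount ε (j' :: w) + 1 := by
        simp [vcount, hv]; omega
      have hvc' : vcount ε (j' :: w) = vcount ε w := vcount_cons_false ε hv.2 w
      rcases q with - | q'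
      · have hk : w.length < k := by omega
        rw [blocksF_eq_empty ε hk, ih2 hq']
        simp
      · have hk : k + q' = w.length := by omega
        rw [ih2 hq', ih1 hk, hvc, hvc']
        have := Nat.choose_succ_succ (vcount ε w) q'
        simp only [Nat.succ_eq_add_one] at *
        omega
    · rw [if_neg hv]
      have hvc : vcount ε (j :: j' :: w) = vcount ε (j' :: w) := by
        simp only [vcount, if_neg hv, Nat.zero_add]
      rw [ih2 hq', hvc]
      simp

end CombLemma

namespace CombLemma

open Fin.NatCast Fin.CommRing

variable {n : ℕ} (ε : Fin n → Bool)

/-- Valid cyclic positions. -/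
def D [NeZero n] : Finset (Fin n) :=
  Finset.univ.filter (fun j => ε j = true ∧ ε (j + 1) = false)

lemma vcount_W_succ [NeZero n] (N : ℕ) (c : Fin n) :
    vcount ε (W (N+1) c) =
      ∑ p ∈ Finset.range N, (if ε (c + (p : Fin n)) = true ∧ ε (c + (p : Fin n) + 1) = false
        then 1 else 0) := by
  induction N generalizing c with
  | zero => simp [W, vcount]
  | succ N ih =>
    have step : vcount ε (W (N+2) c) =
        (if ε c = true ∧ ε (c + 1) = false then 1 else 0) + vcount ε (W (N+1) (c+1)) := rfl
    rw [step, ih (c+1), Finset.sum_range_succ', add_comm]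
    congr 1
    · apply Finset.sum_congr rfl
      intro p _
      have h1 : ((p + 1 : ℕ) : Fin n) = (p : Fin n) + 1 := by push_cast; ring
      have h2 : c + ((p : Fin n) + 1) = c + 1 + (p : Fin n) := by ring
      rw [h1, h2]
    · norm_num

lemma vcount_W_card [NeZero n] (c : Fin n) :
    vcount ε (W n c) + (if (c - 1) ∈ D ε then 1 else 0) = (D ε).card := by
  obtain ⟨N, rfl⟩ : ∃ N, n = N + 1 := ⟨n - 1, (Nat.succ_pred_eq_of_pos (Nat.pos_of_ne_zero (NeZero.ne n))).symm⟩
  have hN : ((N : ℕ) : Fin (N+1)) = -1 := by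
    have h0 : ((N : ℕ) : Fin (N+1)) + 1 = 0 := by
      have h' : (((N + 1 : ℕ)) : Fin (N+1)) = 0 := Fin.natCast_self _
      rwa [Nat.cast_add, Nat.cast_one] at h'
    exact eq_neg_of_add_eq_zero_left h0
  set g : Fin (N+1) → ℕ := fun j => if ε j = true ∧ ε (j+1) = false then 1 else 0 with hg
  have hsum : ∑ p ∈ Finset.range (N+1), g (c + (p : Fin (N+1))) = (D ε).card := by
    rw [← Fin.sum_univ_eq_sum_range (fun p => g (c + (p : Fin (N+1)))) (N+1)]
    have h1 : ∀ i : Fin (N+1), g (c + ((i : ℕ) : Fin (N+1))) = g ((Equiv.addLeft c) i) := by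
      intro i; rw [Fin.cast_val_eq_self]; rfl
    rw [Finset.sum_congr rfl (fun i _ => h1 i), Equiv.sum_comp (Equiv.addLeft c) g]
    rw [D, Finset.card_filter]
  have hlast : g (c + ((N : ℕ) : Fin (N+1))) = (if (c - 1) ∈ D ε then 1 else 0) := by
    rw [hN]
    have e2 : c + (-1 : Fin (N+1)) + 1 = c := by ring
    have e1 : c + (-1 : Fin (N+1)) = c - 1 := by ring
    rw [hg]
    simp only [e2, e1, D, Finset.mem_filter, Finset.mem_univ, true_and, sub_add_cancel]
  have hv := vcount_W_succ ε N c
  rw [Finset.sum_range_succ, hlast] at hsum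
  have : vcount ε (W (N+1) c) = ∑ p ∈ Finset.range N, g (c + (p : Fin (N+1))) := hv
  omega

end CombLemma

namespace CombLemma

open Fin.NatCast Fin.CommRing

variable {n : ℕ} (ε : Fin n → Bool)

lemma choose_arith {nn aa k q : ℕ} (hα : aa ≤ nn) (hq : k + q = nn) :
    aa * (aa - 1).choose q + (nn - aa) * aa.choose q = k * aa.choose q := by
  have key : aa * (aa - 1).choose q + q * aa.choose q = aa * aa.choose q := by
    rcases q with - | q'
    · simp
    · rcases aa with - | a
      · simp
      · have h1 := Nat.add_one_mul_choose_eq a q'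
        have h2 := Nat.choose_succ_succ a q'
        simp only [Nat.succ_eq_add_one, Nat.add_sub_cancel] at *
        zify at h1 h2 ⊢
        linear_combination (-1 : ℤ) * h1 - ((a : ℤ) + 1) * h2
  have h2 : (nn - aa) * aa.choose q + aa * aa.choose q = nn * aa.choose q := by
    rw [← Nat.add_mul, Nat.sub_add_cancel hα]
  have h3 : k * aa.choose q + q * aa.choose q = nn * aa.choose q := by
    rw [← Nat.add_mul, hq]
  omega

lemma sum_vcount_choose [NeZero n] {k q : ℕ} (hq : k + q = n) :
    ∑ c : Fin n, ((vcount ε (W n c)).choose q) = k * ((D ε).card).choose q := by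
  set α := (D ε).card with hα
  have hαn : α ≤ n := by
    have := Finset.card_le_univ (D ε)
    simpa using this
  have hvc : ∀ c : Fin n, (vcount ε (W n c)).choose q =
      (if (c - 1) ∈ D ε then (α - 1).choose q else α.choose q) := by
    intro c
    have h := vcount_W_card ε c
    split
    · next hmem =>
        rw [if_pos hmem] at h
        have : vcount ε (W n c) = α - 1 := by omega
        rw [this]
    · next hmem =>
        rw [if_neg hmem] at h
        have : vcount ε (W n c) = α := by omega
        rw [this]
  rw [Finset.sum_congr rfl (fun c _ => hvc c)]
  have hre := Equiv.sum_comp (Equiv.subRight (1 : Fin n))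
    (fun b => if b ∈ D ε then (α - 1).choose q else α.choose q)
  have hco : ∀ c : Fin n, (Equiv.subRight (1 : Fin n)) c = c - 1 := fun c => rfl
  simp only [hco] at hre
  rw [hre]
  rw [Finset.sum_ite]
  rw [Finset.sum_const, Finset.sum_const]
  have hc1 : (Finset.univ.filter (fun b : Fin n => b ∈ D ε)).card = α := by
    rw [Finset.filter_univ_mem]
  have hc2 : (Finset.univ.filter (fun b : Fin n => b ∉ D ε)).card = n - α := by
    have : Finset.univ.filter (fun b : Fin n => b ∉ D ε) = (D ε)ᶜ := by
      ext b; simp [Finset.mem_compl]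
    rw [this, Finset.card_compl, Fintype.card_fin]
  rw [hc1, hc2, smul_eq_mul, smul_eq_mul]
  exact choose_arith hαn hq

end CombLemma

namespace CombLemma

open Fin.NatCast Fin.CommRing

variable {n : ℕ} (ε : Fin n → Bool)

def eIdx (j : Fin n) : Fin n ⊕ Fin n := if ε j then Sum.inr j else Sum.inl j

lemma eIdx_injective : Function.Injective (eIdx ε) := by
  intro j j' h
  unfold eIdx at h
  by_cases h1 : ε j <;> by_cases h2 : ε j' <;> simp [h1, h2] at h <;> exact h

noncomputable def dg : F n → ((Fin n ⊕ Fin n) →₀ ℕ)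
  | Sum.inl j => Finsupp.single (Sum.inl j) 1
  | Sum.inr (Sum.inl i) => Finsupp.single (Sum.inr i) 1
  | Sum.inr (Sum.inr (i, j)) => Finsupp.single (Sum.inr i) 1 + Finsupp.single (Sum.inl j) 1

noncomputable def vm : F n → MvPolynomial (Fin n ⊕ Fin n) ℂ
  | Sum.inl j => MvPolynomial.X (Sum.inl j)
  | Sum.inr (Sum.inl i) => MvPolynomial.X (Sum.inr i)
  | Sum.inr (Sum.inr (i, j)) => MvPolynomial.X (Sum.inr i) * MvPolynomial.X (Sum.inl j)

lemma eIdx_eq_inl_iff {j' j : Fin n} : eIdx ε j' = Sum.inl j ↔ (ε j' = false ∧ j' = j) := by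
  unfold eIdx; by_cases h : ε j' <;> simp [h]

lemma eIdx_eq_inr_iff {j' j : Fin n} : eIdx ε j' = Sum.inr j ↔ (ε j' = true ∧ j' = j) := by
  unfold eIdx; by_cases h : ε j' <;> simp [h]

lemma vm_eq_monomial (u : F n) : vm u = MvPolynomial.monomial (dg u) (1 : ℂ) := by
  rcases u with j | i | ⟨i, j⟩
  · rfl
  · rfl
  · rw [vm, dg,
      show (MvPolynomial.X (Sum.inr i) : MvPolynomial (Fin n ⊕ Fin n) ℂ)
        = MvPolynomial.monomial (Finsupp.single (Sum.inr i) 1) 1 from rfl,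
      show (MvPolynomial.X (Sum.inl j) : MvPolynomial (Fin n ⊕ Fin n) ℂ)
        = MvPolynomial.monomial (Finsupp.single (Sum.inl j) 1) 1 from rfl,
      MvPolynomial.monomial_mul, one_mul]

noncomputable def eDeg : (Fin n ⊕ Fin n) →₀ ℕ := ∑ j : Fin n, Finsupp.single (eIdx ε j) 1

lemma dg_shape {u : F n} (h : shape ε u) :
    dg u = ((wl u).map (fun j => Finsupp.single (eIdx ε j) 1)).sum := by
  rcases u with j | i | ⟨i, j⟩
  · simp only [shape] at h; simp [dg, wl, eIdx, h]
  · simp only [shape] at h; simp [dg, wl, eIdx, h]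
  · obtain ⟨h1, h2⟩ := h; simp [dg, wl, eIdx, h1, h2]

lemma dL_shape_sum (l : List (F n)) (h : ∀ u ∈ l, shape ε u) :
    (l.map dg).sum = ((wordL l).map (fun j => Finsupp.single (eIdx ε j) 1)).sum := by
  induction l with
  | nil => rfl
  | cons u l ih =>
    simp only [List.map_cons, List.sum_cons, wordL_cons, List.map_append, List.sum_append]
    rw [ih (fun u hu => h u (by simp [hu])), dg_shape ε (h u (by simp))]

lemma sum_single_apply (s : Multiset (Fin n)) (j₀ : Fin n) :
    ((s.map (fun j => Finsupp.single (eIdx ε j) 1)).sum) (eIdx ε j₀) = s.count j₀ := by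
  induction s using Multiset.induction with
  | empty => simp
  | cons j s ih =>
    simp only [Multiset.map_cons, Multiset.sum_cons, Finsupp.add_apply, ih,
      Multiset.count_cons, Finsupp.single_apply]
    rw [add_comm]
    congr 1
    by_cases h : j = j₀
    · simp [h]
    · rw [if_neg (fun hc => h (eIdx_injective ε hc)), if_neg (fun hc => h hc.symm)]

lemma sum_single_inj (s t : Multiset (Fin n))
    (h : (s.map (fun j => Finsupp.single (eIdx ε j) 1)).sum
       = (t.map (fun j => Finsupp.single (eIdx ε j) 1)).sum) : s = t := by
  ext j₀
  rw [← sum_single_apply ε s j₀, ← sum_single_apply ε t j₀, h]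

lemma le_sum_of_mem_dL {l : List (F n)} {u : F n} (hu : u ∈ l) (v : Fin n ⊕ Fin n) :
    dg u v ≤ ((l.map dg).sum) v := by
  induction l with
  | nil => simp at hu
  | cons u' l ih =>
    simp only [List.map_cons, List.sum_cons, Finsupp.add_apply]
    rcases List.mem_cons.1 hu with rfl | hu'
    · exact Nat.le_add_right _ _
    · exact le_add_of_nonneg_of_le (Nat.zero_le _) (ih hu')

lemma eDeg_apply_inl (j : Fin n) :
    (eDeg ε) (Sum.inl j) = if ε j then 0 else 1 := by
  rw [eDeg, Finset.sum_apply']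
  have key : ∀ j' : Fin n, (Finsupp.single (eIdx ε j') 1) (Sum.inl j)
      = if j' = j then (if ε j then 0 else 1) else (0:ℕ) := by
    intro j'
    rw [Finsupp.single_apply]
    by_cases h1 : j' = j
    · subst h1
      by_cases h2 : ε j' <;> simp [eIdx, h2]
    · rw [if_neg (fun hc => h1 ((eIdx_eq_inl_iff ε).1 hc).2), if_neg h1]
  rw [Finset.sum_congr rfl (fun j' _ => key j')]
  simp [Finset.sum_ite_eq']

lemma eDeg_apply_inr (j : Fin n) :
    (eDeg ε) (Sum.inr j) = if ε j then 1 else 0 := by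
  rw [eDeg, Finset.sum_apply']
  have key : ∀ j' : Fin n, (Finsupp.single (eIdx ε j') 1) (Sum.inr j)
      = if j' = j then (if ε j then 1 else 0) else (0:ℕ) := by
    intro j'
    rw [Finsupp.single_apply]
    by_cases h1 : j' = j
    · subst h1
      by_cases h2 : ε j' <;> simp [eIdx, h2]
    · rw [if_neg (fun hc => h1 ((eIdx_eq_inr_iff ε).1 hc).2), if_neg h1]
  rw [Finset.sum_congr rfl (fun j' _ => key j')]
  simp [Finset.sum_ite_eq']

lemma shapes_of_dL {l : List (F n)} (h : (l.map dg).sum = eDeg ε) :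
    ∀ u ∈ l, shape ε u := by
  intro u hu
  rcases u with j | i | ⟨i, j⟩
  · show ε j = false
    by_contra hc
    have h1 : (1 : ℕ) ≤ ((l.map dg).sum) (Sum.inl j) := by
      have := le_sum_of_mem_dL hu (Sum.inl j)
      simpa [dg] using this
    rw [h, eDeg_apply_inl] at h1
    have hc' : ε j = true := by simpa using hc
    simp [hc'] at h1
  · show ε i = true
    by_contra hc
    have h1 : (1 : ℕ) ≤ ((l.map dg).sum) (Sum.inr i) := by
      have := le_sum_of_mem_dL hu (Sum.inr i)
      simpa [dg] using this
    rw [h, eDeg_apply_inr] at h1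
    have hc' : ε i = false := by simpa using hc
    simp [hc'] at h1
  · constructor
    · by_contra hc
      have h1 : (1 : ℕ) ≤ ((l.map dg).sum) (Sum.inr i) := by
        have := le_sum_of_mem_dL hu (Sum.inr i)
        simpa [dg, Finsupp.add_apply, Finsupp.single_apply] using this
      rw [h, eDeg_apply_inr] at h1
      have hc' : ε i = false := by simpa using hc
      simp [hc'] at h1
    · by_contra hc
      have h1 : (1 : ℕ) ≤ ((l.map dg).sum) (Sum.inl j) := by
        have := le_sum_of_mem_dL hu (Sum.inl j)
        simpa [dg, Finsupp.add_apply, Finsupp.single_apply] using this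
      rw [h, eDeg_apply_inl] at h1
      have hc' : ε j = true := by simpa using hc
      simp [hc'] at h1

lemma dL_eq_eDeg_iff (l : List (F n)) :
    (l.map dg).sum = eDeg ε ↔
      ((∀ u ∈ l, shape ε u) ∧ ((wordL l : Multiset (Fin n)) = Finset.univ.val)) := by
  constructor
  · intro h
    refine ⟨shapes_of_dL ε h, ?_⟩
    apply sum_single_inj ε
    have h1 := dL_shape_sum ε l (shapes_of_dL ε h)
    rw [h1] at h
    rw [Multiset.map_coe, Multiset.sum_coe, h]
    rfl
  · rintro ⟨hsh, hw⟩
    rw [dL_shape_sum ε l hsh]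
    have : ((wordL l : Multiset (Fin n)).map (fun j => Finsupp.single (eIdx ε j) 1)).sum
        = ((Finset.univ.val : Multiset (Fin n)).map (fun j => Finsupp.single (eIdx ε j) 1)).sum := by
      rw [hw]
    rw [Multiset.map_coe, Multiset.sum_coe] at this
    rw [this]
    rfl

end CombLemma

namespace CombLemma

open Fin.NatCast Fin.CommRing

section Alg

set_option linter.unusedSectionVars false

variable {A : Type*} [Ring A] [Algebra ℂ A] [StarRing A] [StarModule ℂ A] {m : ℕ}

lemma matTensor_mul (a b : Matrix (Fin m) (Fin m) ℂ) (x y : A) :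
    matTensor a x * matTensor b y = matTensor (a * b) (x * y) := by
  ext i j
  simp only [matTensor, Matrix.mul_apply, Matrix.of_apply]
  rw [Finset.sum_congr rfl (fun l _ => smul_mul_smul_comm (a i l) x (b l j) y),
    ← Finset.sum_smul]

lemma matTensor_one : (matTensor (1 : Matrix (Fin m) (Fin m) ℂ) (1 : A)) = 1 := by
  ext i j
  simp only [matTensor, Matrix.of_apply]
  by_cases h : i = j <;> simp [Matrix.one_apply, h]

lemma star_matTensor (a : Matrix (Fin m) (Fin m) ℂ) (x : A) :
    star (matTensor a x) = matTensor (star a) (star x) := by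
  ext i j
  simp only [matTensor, Matrix.star_apply, Matrix.of_apply, star_smul]

lemma prod_map_matTensor {γ : Type*} (mat : γ → Matrix (Fin m) (Fin m) ℂ) (elt : γ → A)
    (l : List γ) :
    (l.map (fun u => matTensor (mat u) (elt u))).prod
      = matTensor ((l.map mat).prod) ((l.map elt).prod) := by
  induction l with
  | nil => simpa using matTensor_one.symm
  | cons u l ih => simp only [List.map_cons, List.prod_cons, ih, matTensor_mul]

lemma prod_map_smul {γ : Type*} (c : γ → ℂ) (h : γ → Matrix (Fin m) (Fin m) A)
    (l : List γ) :
    (l.map (fun u => c u • h u)).prod = (l.map c).prod • (l.map h).prod := by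
  induction l with
  | nil => simp
  | cons u l ih =>
    simp only [List.map_cons, List.prod_cons, ih, smul_mul_smul_comm]

lemma sum_pow_ofFn {R : Type*} [Semiring R] {ι : Type*} [Fintype ι] [DecidableEq ι]
    (g : ι → R) (k : ℕ) :
    (∑ u, g u) ^ k = ∑ f : Fin k → ι, (List.ofFn (g ∘ f)).prod := by
  induction k with
  | zero =>
    rw [pow_zero]
    have : ∀ f : Fin 0 → ι, (List.ofFn (g ∘ f)).prod = 1 := by intro f; simp
    rw [Finset.sum_congr rfl (fun f _ => this f), Finset.sum_const]
    simp
  | succ k ih =>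
    rw [pow_succ', ih, Finset.sum_mul_sum]
    rw [← Fintype.sum_prod_type']
    apply Fintype.sum_equiv (Fin.consEquiv (fun _ : Fin (k+1) => ι))
    rintro ⟨u, f⟩
    rw [List.ofFn_succ, List.prod_cons]
    simp [Function.comp_def]

end Alg

end CombLemma

namespace CombLemma

open Fin.NatCast Fin.CommRing

variable {n : ℕ}

lemma W_eq_ofFn [NeZero n] (N : ℕ) (c : Fin n) :
    W N c = List.ofFn (fun p : Fin N => c + (p : Fin n)) := by
  apply List.ext_get (by simp)
  intro p h1 h2
  rw [W_get N c p h1, List.get_ofFn]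
  simp

lemma W_perm [NeZero n] (c : Fin n) :
    ((W n c : List (Fin n)) : Multiset (Fin n)) = Finset.univ.val := by
  have hnd : (W n c).Nodup := by
    rw [W_eq_ofFn]
    rw [List.nodup_ofFn]
    intro p q h
    have : c + ((p : ℕ) : Fin n) = c + ((q : ℕ) : Fin n) := h
    have h2 : ((p : ℕ) : Fin n) = ((q : ℕ) : Fin n) := by
      have := congrArg (fun y => -c + y) this
      simpa using this
    rwa [Fin.cast_val_eq_self, Fin.cast_val_eq_self] at h2
  have hmem : ∀ j : Fin n, j ∈ W n c := by
    intro j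
    rw [W_eq_ofFn, List.mem_ofFn]
    exact ⟨(j - c).cast (by simp), by simp [Fin.cast_val_eq_self]⟩
  ext j
  rw [Multiset.coe_count, List.count_eq_one_of_mem hnd (hmem j)]
  exact (Multiset.count_eq_one_of_mem Finset.univ.nodup (Finset.mem_univ j)).symm

lemma W_injective [NeZero n] {c c' : Fin n} (h : W n c = W n c') : c = c' := by
  obtain ⟨N, hN⟩ : ∃ N, n = N + 1 :=
    ⟨n - 1, (Nat.succ_pred_eq_of_pos (Nat.pos_of_ne_zero (NeZero.ne n))).symm⟩
  subst hN
  rw [W, W] at h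
  injection h

section Tau

set_option linter.unusedSectionVars false

variable {A : Type*} [Ring A] [Algebra ℂ A] [StarRing A] [StarModule ℂ A]
variable (τ : A →ₗ[ℂ] ℂ)

lemma tau_append (hτtr : ∀ x y : A, τ (x * y) = τ (y * x)) (l₁ l₂ : List A) :
    τ (l₁ ++ l₂).prod = τ (l₂ ++ l₁).prod := by
  rw [List.prod_append, List.prod_append, hτtr]

lemma tau_rotate (hτtr : ∀ x y : A, τ (x * y) = τ (y * x)) (l : List A) (p : ℕ) (hp : p ≤ l.length) :
    τ (l.rotate p).prod = τ l.prod := by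
  rw [List.rotate_eq_drop_append_take hp, tau_append τ hτtr,
    List.take_append_drop]

lemma tau_W [NeZero n] (hτtr : ∀ x y : A, τ (x * y) = τ (y * x)) (X : Fin n → A) (c : Fin n) :
    τ ((W n c).map X).prod = τ ((W n 0).map X).prod := by
  have hrot : W n c = (W n 0).rotate c.val := by
    apply List.ext_get (by simp)
    intro p h1 h2
    rw [W_get, List.get_rotate, W_get]
    simp only [zero_add]
    apply Fin.ext
    rw [Fin.val_natCast, Fin.val_add, Fin.val_natCast]
    simp only [W_length] at *
    rw [Nat.mod_eq_of_lt h1, Nat.mod_mod_of_dvd _ dvd_rfl, Nat.add_comm]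
  rw [hrot, List.map_rotate, tau_rotate τ hτtr]
  simp only [List.length_map, W_length]
  exact le_of_lt c.isLt

lemma W_zero_map [NeZero n] (X : Fin n → A) :
    (W n 0).map X = List.ofFn X := by
  rw [W_eq_ofFn, List.map_ofFn]
  congr 1
  funext p
  simp [Fin.cast_val_eq_self]

end Tau

end CombLemma

namespace CombLemma

open Fin.NatCast Fin.CommRing

variable {n : ℕ}

lemma prod_map_of_shape {β : Type*} [Monoid β] (ε : Fin n → Bool) (h : F n → β) (hb : Fin n → β)
    (hcompat : ∀ u, shape ε u → h u = ((wl u).map hb).prod) :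
    ∀ l : List (F n), (∀ u ∈ l, shape ε u) → (l.map h).prod = ((wordL l).map hb).prod := by
  intro l hsh
  induction l with
  | nil => rfl
  | cons u l ih =>
    simp only [List.map_cons, List.prod_cons, wordL_cons, List.map_append, List.prod_append]
    rw [ih (fun u hu => hsh u (by simp [hu])), hcompat u (hsh u (by simp))]

lemma trace_step {m : ℕ} [NeZero n] (a : Fin n → Matrix (Fin m) (Fin m) ℂ)
    (hcyc : ∀ σ : Equiv.Perm (Fin n),
      (m : ℂ)⁻¹ * Matrix.trace (List.ofFn (fun j => a (σ j))).prod =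
        if ∃ c : Fin n, ∀ j : Fin n, σ j = j + c then 1 else 0)
    (l : List (Fin n)) (hlen : l.length = n) (hnd : l.Nodup) :
    (m : ℂ)⁻¹ * Matrix.trace ((l.map a).prod) =
      if (∃ c : Fin n, l = W n c) then 1 else 0 := by
  set σfun : Fin n → Fin n := fun p => l.get (Fin.cast hlen.symm p) with hσfun
  have hinj : Function.Injective σfun := by
    intro p q h
    have h2 := List.nodup_iff_injective_get.1 hnd h
    have : (Fin.cast hlen.symm p : Fin l.length) = Fin.cast hlen.symm q := h2
    exact Fin.ext (congrArg (fun z : Fin l.length => z.val) this)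
  have hbij : Function.Bijective σfun := (Finite.injective_iff_bijective).1 hinj
  set σ : Equiv.Perm (Fin n) := Equiv.ofBijective σfun hbij with hσ
  have hofFn : List.ofFn (fun j => a (σ j)) = l.map a := by
    apply List.ext_get (by simp [hlen])
    intro p h1 h2
    simp only [List.get_eq_getElem, List.getElem_ofFn, List.getElem_map]
    rfl
  rw [← hofFn, hcyc σ]
  apply if_congr _ rfl rfl
  constructor
  · rintro ⟨c, hc⟩
    refine ⟨c, ?_⟩
    apply List.ext_get (by simp [hlen])
    intro p h1 h2
    have hp : p < n := by omega
    have h3 : l.get ⟨p, h1⟩ = σ ⟨p, hp⟩ := rfl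
    rw [h3, hc ⟨p, hp⟩, W_get]
    rw [show ((p : ℕ) : Fin n) = (⟨p, hp⟩ : Fin n) from Fin.cast_val_eq_self (⟨p, hp⟩ : Fin n)]
    exact add_comm _ _
  · rintro ⟨c, rfl⟩
    refine ⟨c, fun j => ?_⟩
    have h3 : σ j = (W n c).get (Fin.cast hlen.symm j) := rfl
    rw [h3]
    have h4 : (Fin.cast hlen.symm j : Fin ((W n c).length)) = ⟨j.val, by simp⟩ := rfl
    rw [h4, W_get]
    rw [Fin.cast_val_eq_self]
    exact add_comm _ _

end CombLemma

namespace CombLemma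

open Fin.NatCast Fin.CommRing

lemma prod_monomial {n : ℕ} {ι : Type*} [DecidableEq ι] (s : Finset ι)
    (g : ι → ((Fin n ⊕ Fin n) →₀ ℕ)) :
    (∏ t ∈ s, MvPolynomial.monomial (g t) (1:ℂ)) = MvPolynomial.monomial (∑ t ∈ s, g t) 1 := by
  induction s using Finset.induction with
  | empty => simp
  | insert a s h ih =>
    rw [Finset.prod_insert h, Finset.sum_insert h, ih, MvPolynomial.monomial_mul, one_mul]

end CombLemma

open CombLemma

/-- **Combinatorial lemma.**  Let `A` be a unital complex `*`-algebra with a tracial linear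
functional `τ`.  Fix a sign pattern `ε ∈ {1, *}ⁿ` (`ε j = true` meaning `*`), elements
`x₁, …, xₙ ∈ A` and matrices `a₁, …, aₙ ∈ M_m(ℂ)` with the cyclic trace property, and set
`S_z = 1 + Σ_j z_j (a_j^{ε_j} ⊗ x_j)`.  Then for every `k`, the function
`z ↦ (tr_m ⊗ τ)((S_z* S_z − 1)^k)` is a polynomial in `z, conj z`, and the coefficient of
`z^ε = ∏_j z_j^{ε_j}` equals `τ(x₁^{ε₁} ⋯ xₙ^{εₙ}) · k · binom(α(ε), n−k)`. -/
theorem combinatorial_lemma_coeff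
    {A : Type*} [Ring A] [Algebra ℂ A] [StarRing A] [StarModule ℂ A]
    (τ : A →ₗ[ℂ] ℂ) (hτtr : ∀ x y : A, τ (x * y) = τ (y * x))
    (n : ℕ) (hn : 1 ≤ n) (m : ℕ) (hm : 1 ≤ m)
    (ε : Fin n → Bool) (x : Fin n → A)
    (a : Fin n → Matrix (Fin m) (Fin m) ℂ)
    (hcyc : ∀ σ : Equiv.Perm (Fin n),
      (m : ℂ)⁻¹ * Matrix.trace (List.ofFn (fun j => a (σ j))).prod =
        if ∃ c : Fin n, ∀ j : Fin n, σ j = j + c then 1 else 0) :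
    ∀ k : ℕ, ∃ P : MvPolynomial (Fin n ⊕ Fin n) ℂ,
      (∀ z : Fin n → ℂ,
        (m : ℂ)⁻¹ * ∑ i, τ
          (((star (1 + ∑ j, z j • matTensor (if ε j then star (a j) else a j) (x j)) *
              (1 + ∑ j, z j • matTensor (if ε j then star (a j) else a j) (x j)) - 1) ^ k) i i) =
          MvPolynomial.eval (Sum.elim z (fun j => conj (z j))) P) ∧
      MvPolynomial.coeff
          (∑ j : Fin n, Finsupp.single (if ε j then Sum.inr j else Sum.inl j) 1) P =
        τ (List.ofFn (fun j => if ε j then star (x j) else x j)).prod * k *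
          (if k ≤ n then
            ((((Finset.univ.filter fun j : Fin n =>
                ε j = true ∧ ε (finRotate n j) = false).card).choose (n - k) : ℂ))
          else 0) := by
  intro k
  haveI : NeZero n := ⟨by omega⟩
  classical
  set Amat : Fin n → Matrix (Fin m) (Fin m) ℂ := fun j => if ε j then star (a j) else a j
    with hAmat
  set mat : F n → Matrix (Fin m) (Fin m) ℂ :=
    Sum.elim (fun j => Amat j)
      (Sum.elim (fun i => star (Amat i)) (fun p => star (Amat p.1) * Amat p.2)) with hmat
  set elt : F n → A :=
    Sum.elim (fun j => x j)
      (Sum.elim (fun i => star (x i)) (fun p => star (x p.1) * x p.2)) with helt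
  set γ : (Fin n → ℂ) → F n → ℂ := fun z =>
    Sum.elim (fun j => z j)
      (Sum.elim (fun i => conj (z i)) (fun p => conj (z p.1) * z p.2)) with hγ
  set cf : (Fin k → F n) → ℂ := fun f =>
    (m : ℂ)⁻¹ * Matrix.trace (((List.ofFn f).map mat).prod) * τ (((List.ofFn f).map elt).prod)
    with hcf
  refine ⟨∑ f : Fin k → F n, cf f • ∏ t : Fin k, vm (f t), ?_, ?_⟩
  · -- evaluation identity
    intro z
    set T : Matrix (Fin m) (Fin m) A := ∑ j, z j • matTensor (Amat j) (x j) with hT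
    set Tst : Matrix (Fin m) (Fin m) A :=
      ∑ j, (conj (z j)) • matTensor (star (Amat j)) (star (x j)) with hTst
    have hssmul : ∀ (c : ℂ) (M : Matrix (Fin m) (Fin m) A),
        star (c • M) = (conj c) • star M := by
      intro c M
      ext i j
      simp only [Matrix.star_apply, Matrix.smul_apply, star_smul]
      rfl
    have hstar : star (1 + T) = 1 + Tst := by
      rw [star_add, star_one, hT, star_sum, hTst]
      congr 1
      apply Finset.sum_congr rfl
      intro j _
      rw [hssmul, star_matTensor]
    have hB : star (1 + T) * (1 + T) - 1 = Tst + T + Tst * T := by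
      rw [hstar]; noncomm_ring
    have hBsum : Tst + T + Tst * T = ∑ u : F n, γ z u • matTensor (mat u) (elt u) := by
      rw [Fintype.sum_sum_type, Fintype.sum_sum_type, Fintype.sum_prod_type]
      have h1 : ∀ j : Fin n, γ z (Sum.inl j) • matTensor (mat (Sum.inl j)) (elt (Sum.inl j))
          = z j • matTensor (Amat j) (x j) := fun j => rfl
      have h2 : ∀ i : Fin n,
          γ z (Sum.inr (Sum.inl i)) • matTensor (mat (Sum.inr (Sum.inl i))) (elt (Sum.inr (Sum.inl i)))
          = conj (z i) • matTensor (star (Amat i)) (star (x i)) := fun i => rfl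
      have h3 : ∀ i j : Fin n,
          γ z (Sum.inr (Sum.inr (i, j))) • matTensor (mat (Sum.inr (Sum.inr (i, j))))
            (elt (Sum.inr (Sum.inr (i, j))))
          = (conj (z i) • matTensor (star (Amat i)) (star (x i))) * (z j • matTensor (Amat j) (x j)) := by
        intro i j
        rw [smul_mul_smul_comm, matTensor_mul]
        rfl
      rw [Finset.sum_congr rfl (fun j _ => h1 j), Finset.sum_congr rfl (fun i _ => h2 i)]
      have h4 : ∑ i : Fin n, ∑ j : Fin n,
          γ z (Sum.inr (Sum.inr (i, j))) • matTensor (mat (Sum.inr (Sum.inr (i, j))))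
            (elt (Sum.inr (Sum.inr (i, j))))
          = Tst * T := by
        rw [hTst, hT, Finset.sum_mul_sum]
        exact Finset.sum_congr rfl (fun i _ => Finset.sum_congr rfl (fun j _ => h3 i j))
      rw [h4]
      abel
    rw [hB, hBsum, sum_pow_ofFn]
    have hPf : ∀ f : Fin k → F n,
        (List.ofFn ((fun u => γ z u • matTensor (mat u) (elt u)) ∘ f)).prod
        = (((List.ofFn f).map (γ z)).prod) •
            matTensor (((List.ofFn f).map mat).prod) (((List.ofFn f).map elt).prod) := by
      intro f
      rw [← List.map_ofFn (f := f) (g := fun u => γ z u • matTensor (mat u) (elt u)),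
        prod_map_smul (γ z) (fun u => matTensor (mat u) (elt u)),
        prod_map_matTensor mat elt]
    rw [Finset.sum_congr rfl (fun f _ => hPf f)]
    -- expand the trace/τ of the sum
    have hdiag : ∀ i : Fin m,
        τ ((∑ f : Fin k → F n, (((List.ofFn f).map (γ z)).prod) •
            matTensor (((List.ofFn f).map mat).prod) (((List.ofFn f).map elt).prod)) i i)
        = ∑ f : Fin k → F n, (((List.ofFn f).map (γ z)).prod) *
            ((((List.ofFn f).map mat).prod) i i * τ (((List.ofFn f).map elt).prod)) := by
      intro i
      rw [Matrix.sum_apply, map_sum]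
      apply Finset.sum_congr rfl
      intro f _
      rw [Matrix.smul_apply]
      have hentry : (matTensor (((List.ofFn f).map mat).prod) (((List.ofFn f).map elt).prod)) i i
          = (((List.ofFn f).map mat).prod) i i • (((List.ofFn f).map elt).prod) := rfl
      rw [hentry, map_smul, map_smul, smul_eq_mul, smul_eq_mul]
    rw [Finset.sum_congr rfl (fun i _ => hdiag i), Finset.sum_comm, map_sum, Finset.mul_sum]
    apply Finset.sum_congr rfl
    intro f _
    have heval : ∀ u : F n,
        MvPolynomial.eval (Sum.elim z fun j => conj (z j)) (vm u) = γ z u := by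
      intro u
      rcases u with j | i | ⟨i, j⟩ <;> simp [vm, hγ]
    rw [MvPolynomial.smul_eq_C_mul, map_mul, MvPolynomial.eval_C, map_prod,
      Finset.prod_congr rfl (fun t _ => heval (f t))]
    have hγprod : ((List.ofFn f).map (γ z)).prod = ∏ t : Fin k, γ z (f t) := by
      rw [List.map_ofFn, List.prod_ofFn]
      rfl
    have htr : Matrix.trace (((List.ofFn f).map mat).prod)
        = ∑ i, (((List.ofFn f).map mat).prod) i i := by
      simp [Matrix.trace, Matrix.diag]
    have hsum : ∑ i, (((List.ofFn f).map (γ z)).prod *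
          ((((List.ofFn f).map mat).prod) i i * τ (((List.ofFn f).map elt).prod)))
        = (∑ i, (((List.ofFn f).map mat).prod) i i) *
            (((List.ofFn f).map (γ z)).prod * τ (((List.ofFn f).map elt).prod)) := by
      rw [Finset.sum_mul]
      apply Finset.sum_congr rfl
      intro i _
      ring
    rw [hsum]
    simp only [hcf]
    rw [htr, hγprod]
    ring
  · -- coefficient identity
    have heD : (∑ j : Fin n, Finsupp.single (if ε j then Sum.inr j else Sum.inl j) (1:ℕ))
        = eDeg ε := rfl
    rw [heD, MvPolynomial.coeff_sum]
    have hprodvm : ∀ f : Fin k → F n,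
        (∏ t : Fin k, vm (f t)) = MvPolynomial.monomial (((List.ofFn f).map dg).sum) (1:ℂ) := by
      intro f
      rw [Finset.prod_congr rfl (fun t _ => vm_eq_monomial (f t)), prod_monomial]
      congr 1
      rw [List.map_ofFn, List.sum_ofFn]
      rfl
    have hcoef : ∀ f : Fin k → F n,
        MvPolynomial.coeff (eDeg ε) (cf f • ∏ t : Fin k, vm (f t))
          = if ((List.ofFn f).map dg).sum = eDeg ε then cf f else 0 := by
      intro f
      rw [MvPolynomial.coeff_smul, hprodvm f, MvPolynomial.coeff_monomial, smul_eq_mul]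
      by_cases hh : ((List.ofFn f).map dg).sum = eDeg ε <;> simp [hh]
    rw [Finset.sum_congr rfl (fun f _ => hcoef f), ← Finset.sum_filter]
    set X : Fin n → A := fun j => if ε j then star (x j) else x j with hX
    set τ0 : ℂ := τ (List.ofFn X).prod with hτ0
    set filt : Finset (Fin k → F n) :=
      Finset.univ.filter (fun f => ((List.ofFn f).map dg).sum = eDeg ε) with hfilt
    have hmatc : ∀ u, shape ε u → mat u = ((wl u).map a).prod := by
      intro u hu
      rcases u with j | i | ⟨i, j⟩
      · have h1 : ε j = false := hu
        simp [hmat, hAmat, wl, h1]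
      · have h1 : ε i = true := hu
        simp [hmat, hAmat, wl, h1]
      · obtain ⟨h1, h2⟩ := hu
        simp [hmat, hAmat, wl, h1, h2]
    have heltc : ∀ u, shape ε u → elt u = ((wl u).map X).prod := by
      intro u hu
      rcases u with j | i | ⟨i, j⟩
      · have h1 : ε j = false := hu
        simp [helt, hX, wl, h1]
      · have h1 : ε i = true := hu
        simp [helt, hX, wl, h1]
      · obtain ⟨h1, h2⟩ := hu
        simp [helt, hX, wl, h1, h2]
    have key : ∀ f ∈ filt, cf f
        = ∑ c : Fin n, (if wordL (List.ofFn f) = W n c then τ0 else 0) := by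
      intro f hf
      have hdl := (Finset.mem_filter.1 hf).2
      obtain ⟨hsh', hms⟩ := (dL_eq_eDeg_iff ε (List.ofFn f)).1 hdl
      have hlen : (wordL (List.ofFn f)).length = n := by
        have hc := congrArg Multiset.card hms
        rw [Multiset.coe_card] at hc
        simpa using hc
      have hnd : (wordL (List.ofFn f)).Nodup := by
        rw [← Multiset.coe_nodup, hms]
        exact Finset.univ.nodup
      have hmp : ((List.ofFn f).map mat).prod = ((wordL (List.ofFn f)).map a).prod :=
        prod_map_of_shape ε mat a hmatc _ hsh'
      have hep : ((List.ofFn f).map elt).prod = ((wordL (List.ofFn f)).map X).prod :=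
        prod_map_of_shape ε elt X heltc _ hsh'
      simp only [hcf]
      rw [hmp, hep, trace_step a hcyc _ hlen hnd]
      by_cases hex : ∃ c : Fin n, wordL (List.ofFn f) = W n c
      · obtain ⟨c₀, hc₀⟩ := hex
        rw [if_pos ⟨c₀, hc₀⟩, one_mul]
        rw [Finset.sum_eq_single c₀]
        · rw [if_pos hc₀, hτ0, hc₀, tau_W τ hτtr X c₀, W_zero_map]
        · intro c _ hne
          rw [if_neg]
          intro hcon
          exact hne (W_injective (hcon.symm.trans hc₀))
        · intro h
          exact absurd (Finset.mem_univ c₀) h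
      · rw [if_neg hex, zero_mul]
        symm
        apply Finset.sum_eq_zero
        intro c _
        rw [if_neg (fun hc => hex ⟨c, hc⟩)]
    rw [Finset.sum_congr rfl key, Finset.sum_comm]
    have hcard : ∀ c : Fin n,
        (∑ f ∈ filt, if wordL (List.ofFn f) = W n c then τ0 else 0)
          = ((blocksF ε (W n c) k).card : ℂ) * τ0 := by
      intro c
      rw [← Finset.sum_filter, Finset.sum_const]
      have hcc : (filt.filter (fun f => wordL (List.ofFn f) = W n c)).card
          = (blocksF ε (W n c) k).card := by
        apply Finset.card_bij (fun f _ => List.ofFn f)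
        · intro f hf
          obtain ⟨hf1, hw⟩ := Finset.mem_filter.1 hf
          obtain ⟨hsh', hms⟩ := (dL_eq_eDeg_iff ε _).1 (Finset.mem_filter.1 hf1).2
          exact (mem_blocksF ε).2 ⟨hw, hsh', by simp⟩
        · intro f1 h1 f2 h2 h
          exact List.ofFn_injective h
        · intro l hl
          obtain ⟨hw, hshl, hlk⟩ := (mem_blocksF ε).1 hl
          have hofn : List.ofFn (fun t => l.get (Fin.cast hlk.symm t)) = l := by
            apply List.ext_get (by simp [hlk])
            intro p h1 h2
            rw [List.get_ofFn]
            rfl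
          refine ⟨fun t => l.get (Fin.cast hlk.symm t), ?_, hofn⟩
          apply Finset.mem_filter.2
          constructor
          · apply Finset.mem_filter.2
            refine ⟨Finset.mem_univ _, ?_⟩
            rw [hofn]
            apply (dL_eq_eDeg_iff ε l).2 ⟨hshl, ?_⟩
            rw [hw]
            exact W_perm c
          · rw [hofn, hw]
      rw [hcc, nsmul_eq_mul]
    rw [Finset.sum_congr rfl (fun c _ => hcard c)]
    by_cases hk : k ≤ n
    · have hq : k + (n - k) = n := by omega
      have hcb : ∀ c : Fin n,
          (blocksF ε (W n c) k).card = (vcount ε (W n c)).choose (n - k) := by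
        intro c
        exact card_blocksF ε (by rw [W_length]; omega)
      have hstep : ∀ c : Fin n,
          ((blocksF ε (W n c) k).card : ℂ) * τ0
            = (((vcount ε (W n c)).choose (n - k) : ℕ) : ℂ) * τ0 := by
        intro c; rw [hcb c]
      rw [Finset.sum_congr rfl (fun c _ => hstep c), ← Finset.sum_mul, ← Nat.cast_sum,
        sum_vcount_choose ε hq]
      have hDα : (Finset.univ.filter fun j : Fin n =>
          ε j = true ∧ ε (finRotate n j) = false) = D ε := by
        ext j
        obtain ⟨N, hN⟩ : ∃ N, n = N + 1 := ⟨n - 1, by omega⟩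
        subst hN
        simp [D, finRotate_succ_apply]
      rw [if_pos hk, hDα]
      push_cast
      ring
    · rw [if_neg hk]
      have hz : ∀ c : Fin n, ((blocksF ε (W n c) k).card : ℂ) * τ0 = 0 := by
        intro c
        rw [blocksF_eq_empty ε (by rw [W_length]; omega)]
        simp
      rw [Finset.sum_congr rfl (fun c _ => hz c)]
      simp
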